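/- arXiv:math/0102086 — 3 statements merged into one kernel-verified Lean document; each statement's English description precedes it below -/
import Mathlib

section
/- Let κ < θ be regular uncountable cardinals. Consider the poset P whose conditions are bounded subsets s of {α < θ : cf(α) = κ} such that s is not stationary in sup(s) and no initial segment s ∩ β is stationary in β, ordered by end-extension (p ≤ q iff q = p ∩ sup(q)). Then P is <κ-directed closed: every directed subset of P of size less than κ has a lower bound, namely the union of its elements. -/
open Cardinal

/-- `C` is closed and unbounded in `β`: a subset of `β` that is unbounded in
`β` and closed under suprema of its bounded nonempty subsets. -/
def ClubIn (C : Set Ordinal.{0}) (β : Ordinal.{0}) : Prop :=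
  C ⊆ Set.Iio β ∧ (∀ α < β, ∃ γ ∈ C, α ≤ γ) ∧
    ∀ α < β, (C ∩ Set.Iio α).Nonempty → sSup (C ∩ Set.Iio α) ∈ C

/-- `S` is stationary in `β`: `S` meets every closed unbounded subset of `β`. -/
def StatIn (S : Set Ordinal.{0}) (β : Ordinal.{0}) : Prop :=
  ∀ C : Set Ordinal.{0}, ClubIn C β → (S ∩ C).Nonempty

/-- A condition in the poset for adding a stationary non-reflecting subset of
`θ ∩ Cof κ`: a bounded subset `s` of `{α < θ : cf α = κ}` which is not
stationary in `sup s` and no initial segment of which is stationary in its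
supremum (stationarity being a meaningful requirement at ordinals of
uncountable cofinality). -/
def NRCond (κ θ : Cardinal.{0}) (s : Set Ordinal.{0}) : Prop :=
  (∃ η < θ.ord, ∀ x ∈ s, x ≤ η) ∧
  (∀ x ∈ s, x < θ.ord ∧ x.cof = κ) ∧
  (ℵ₀ < (sSup s).cof → ¬ StatIn s (sSup s)) ∧
  ∀ β : Ordinal.{0}, ℵ₀ < β.cof → ¬ StatIn (s ∩ Set.Iio β) β

/-- `u` end-extends `s`: `s` is an initial segment of `u`. -/
def EndExt (u s : Set Ordinal.{0}) : Prop :=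
  s ⊆ u ∧ ∀ x ∈ u, x ∉ s → ∀ y ∈ s, y < x

/-- Any set of ordinals of size `< κ` can be indexed by a small type. -/
lemma exists_small_index (X : Set Ordinal.{0}) {κ : Cardinal.{0}}
    (hX : #X < Cardinal.lift.{1} κ) :
    ∃ (ι : Type) (f : ι → Ordinal.{0}), #ι < κ ∧ Set.range f = X := by
  obtain ⟨c, hcκ, hceq⟩ := Cardinal.lt_lift_iff.mp hX
  have h1 : Cardinal.lift.{1} #c.out = Cardinal.lift.{0} #(↥X) := by
    rw [Cardinal.mk_out, Cardinal.lift_id'.{0,1}]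
    exact hceq
  obtain ⟨e⟩ := Cardinal.lift_mk_eq'.mp h1
  refine ⟨c.out, fun i => (e i : Ordinal), by rwa [Cardinal.mk_out], ?_⟩
  ext x
  constructor
  · rintro ⟨i, rfl⟩; exact (e i).2
  · intro hx; exact ⟨e.symm ⟨x, hx⟩, by simp⟩

lemma cof_sSup_lt {X : Set Ordinal.{0}} {κ : Cardinal.{0}} (hX : #X < Cardinal.lift.{1} κ)
    (hlt : ∀ x ∈ X, x < sSup X) : (sSup X).cof < κ := by
  obtain ⟨ι, f, hι, hrange⟩ := exists_small_index X hX
  have hsup : iSup f = sSup X := by rw [← hrange]; rfl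
  have H : ∀ i, f i < iSup f := by
    intro i
    rw [hsup]
    exact hlt (f i) (hrange ▸ Set.mem_range_self i)
  calc (sSup X).cof = (iSup f).cof := by rw [hsup]
    _ ≤ #ι := Ordinal.cof_iSup_le H
    _ < κ := hι

lemma sSup_lt_ord_of {X : Set Ordinal.{0}} {θ : Cardinal.{0}} (hθ : θ.IsRegular)
    (hX : #X < Cardinal.lift.{1} θ) (h : ∀ x ∈ X, x < θ.ord) : sSup X < θ.ord := by
  obtain ⟨ι, f, hι, hrange⟩ := exists_small_index X hX
  have hsup : iSup f = sSup X := by rw [← hrange]; rfl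
  rw [← hsup]
  exact Cardinal.iSup_lt_ord_of_isRegular hθ hι fun i => h (f i) (hrange ▸ Set.mem_range_self i)

lemma clubIn_Ioo {μ β : Ordinal.{0}} (hμβ : μ < β) (hβ : Order.IsSuccLimit β) :
    ClubIn (Set.Ioo μ β) β := by
  refine ⟨fun x hx => hx.2, ?_, ?_⟩
  · intro α hα
    refine ⟨max α (Order.succ μ), ⟨?_, ?_⟩, le_max_left _ _⟩
    · exact lt_of_lt_of_le (Order.lt_succ μ) (le_max_right _ _)
    · exact max_lt hα (hβ.succ_lt hμβ)
  · rintro α hα ⟨c, hc⟩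
    have hbdd : BddAbove (Set.Ioo μ β ∩ Set.Iio α) := ⟨α, fun x hx => hx.2.le⟩
    refine ⟨lt_of_lt_of_le hc.1.1 (le_csSup hbdd hc), ?_⟩
    exact lt_of_le_of_lt (csSup_le' fun x hx => hx.2.le) hα

lemma clubIn_closure {E : Set Ordinal.{0}} {β : Ordinal.{0}}
    (hE : E ⊆ Set.Iio β) (hcof : ∀ α < β, ∃ e ∈ E, α < e) :
    ClubIn (E ∪ {γ | γ < β ∧ (E ∩ Set.Iio γ).Nonempty ∧ sSup (E ∩ Set.Iio γ) = γ}) β := by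
  set C := E ∪ {γ | γ < β ∧ (E ∩ Set.Iio γ).Nonempty ∧ sSup (E ∩ Set.Iio γ) = γ} with hC
  have hCsub : C ⊆ Set.Iio β := by
    rintro x (hx | hx)
    · exact hE hx
    · exact hx.1
  refine ⟨hCsub, ?_, ?_⟩
  · intro α hα
    obtain ⟨e, he, hαe⟩ := hcof α hα
    exact ⟨e, Or.inl he, hαe.le⟩
  · intro α hα hne
    set A := C ∩ Set.Iio α with hA
    set δ := sSup A with hδ
    by_cases hmem : δ ∈ A
    · exact hmem.1
    · have hbdd : BddAbove A := ⟨α, fun x hx => hx.2.le⟩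
      have hub : ∀ c ∈ A, c < δ := fun c hc =>
        lt_of_le_of_ne (le_csSup hbdd hc) (fun h => hmem (h ▸ hc))
      have hδβ : δ < β := lt_of_le_of_lt (csSup_le' fun x hx => hx.2.le) hα
      have claim : ∀ ε < δ, ∃ e ∈ E, ε < e ∧ e < δ := by
        intro ε hε
        obtain ⟨c, hc, hεc⟩ := exists_lt_of_lt_csSup hne hε
        have hcδ : c < δ := hub c hc
        rcases hc.1 with hcE | ⟨_, hcne, hcsup⟩
        · exact ⟨c, hcE, hεc, hcδ⟩
        · have h2 : ε < sSup (E ∩ Set.Iio c) := by rwa [hcsup]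
          obtain ⟨e, he, hεe⟩ := exists_lt_of_lt_csSup hcne h2
          exact ⟨e, he.1, hεe, he.2.trans hcδ⟩
      obtain ⟨c, hc⟩ := hne
      obtain ⟨e₀, he₀E, _, he₀δ⟩ := claim c (hub c hc)
      have hne' : (E ∩ Set.Iio δ).Nonempty := ⟨e₀, he₀E, he₀δ⟩
      have hsup : sSup (E ∩ Set.Iio δ) = δ := by
        refine le_antisymm (csSup_le' fun x hx => hx.2.le) ?_
        by_contra h
        push_neg at h
        obtain ⟨e, heE, hlt, heδ⟩ := claim _ h
        exact absurd (le_csSup ⟨δ, fun x hx => hx.2.le⟩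
          (⟨heE, heδ⟩ : e ∈ E ∩ Set.Iio δ)) (not_le.mpr hlt)
      exact Or.inr ⟨hδβ, hne', hsup⟩

/-- For regular uncountable `κ < θ`, the poset of conditions for adding a
stationary non-reflecting subset of `θ ∩ Cof κ`, ordered by end-extension, is
`<κ`-directed closed: any directed set `D` of conditions of size `< κ` has a
lower bound, namely the union `⋃₀ D` of its elements. -/
theorem stmt9 (κ θ : Cardinal.{0}) (hκreg : κ.IsRegular) (hκunc : ℵ₀ < κ)
    (hθreg : θ.IsRegular) (hκθ : κ < θ)
    (D : Set (Set Ordinal.{0}))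
    (hD : ∀ s ∈ D, NRCond κ θ s)
    (hdir : ∀ s ∈ D, ∀ t ∈ D, ∃ u ∈ D, EndExt u s ∧ EndExt u t)
    (hcard : #D < Cardinal.lift.{1} κ) :
    NRCond κ θ (⋃₀ D) ∧ ∀ s ∈ D, EndExt (⋃₀ D) s := by
  have hchain : ∀ s ∈ D, ∀ t ∈ D, EndExt s t ∨ EndExt t s := by
    intro s hs t ht
    obtain ⟨u, hu, ⟨hsu, hsu2⟩, ⟨htu, htu2⟩⟩ := hdir s hs t ht
    by_cases hst : t ⊆ s
    · exact Or.inl ⟨hst, fun x hxs hxt y hyt => htu2 x (hsu hxs) hxt y hyt⟩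
    · have hsub : s ⊆ t := by
        intro y hy
        by_contra hyt
        obtain ⟨z, hzt, hzs⟩ := Set.not_subset.mp hst
        exact absurd (hsu2 z (htu hzt) hzs y hy) (not_lt.mpr (htu2 y (hsu hy) hyt z hzt).le)
      exact Or.inr ⟨hsub, fun x hxt hxs y hys => hsu2 x (htu hxt) hxs y hys⟩
  have hlow : ∀ s ∈ D, EndExt (⋃₀ D) s := by
    intro s hs
    refine ⟨fun y hy => ⟨s, hs, hy⟩, ?_⟩
    rintro x ⟨t, ht, hxt⟩ hxs y hys
    rcases hchain s hs t ht with h | h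
    · exact absurd (h.1 hxt) hxs
    · exact h.2 x hxt hxs y hys
  have hbddD : ∀ s ∈ D, BddAbove s := by
    intro s hs
    obtain ⟨η, _, hη⟩ := (hD s hs).1
    exact ⟨η, hη⟩
  have key : ∀ β : Ordinal.{0}, ℵ₀ < β.cof → ¬ StatIn ((⋃₀ D) ∩ Set.Iio β) β := by
    intro β hβcof hstat
    have hβlim : Order.IsSuccLimit β := Ordinal.aleph0_le_cof.mp hβcof.le
    set S := (⋃₀ D) ∩ Set.Iio β with hS
    have hSbdd : BddAbove S := ⟨β, fun x hx => hx.2.le⟩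
    by_cases hμ : sSup S < β
    · obtain ⟨x, hxS, hxIoo⟩ := hstat _ (clubIn_Ioo hμ hβlim)
      exact absurd (le_csSup hSbdd hxS) (not_le.mpr hxIoo.1)
    · have hcofS : ∀ α < β, ∃ x ∈ S, α < x := by
        intro α hα
        by_contra h
        push_neg at h
        exact hμ (lt_of_le_of_lt (csSup_le' h) hα)
      by_cases hA : ∃ s ∈ D, ∀ x ∈ ⋃₀ D, x < β → x ∈ s
      · obtain ⟨s, hs, hsall⟩ := hA
        have hSe : S = s ∩ Set.Iio β := by
          ext x
          exact ⟨fun hx => ⟨hsall x hx.1 hx.2, hx.2⟩, fun hx => ⟨⟨s, hs, hx.1⟩, hx.2⟩⟩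
        rw [hSe] at hstat
        exact (hD s hs).2.2.2 β hβcof hstat
      · push_neg at hA
        set E := (fun s : Set Ordinal.{0} => sSup s + 1) '' D with hE
        have hEβ : E ⊆ Set.Iio β := by
          rintro _ ⟨s, hs, rfl⟩
          obtain ⟨x, hxU, hxβ, hxs⟩ := hA s hs
          obtain ⟨t, ht, hxt⟩ := hxU
          have hlt : ∀ y ∈ s, y < x := by
            intro y hy
            rcases hchain s hs t ht with h | h
            · exact absurd (h.1 hxt) hxs
            · exact h.2 x hxt hxs y hy
          have h1 : sSup s ≤ x := csSup_le' fun y hy => (hlt y hy).le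
          calc sSup s + 1 ≤ x + 1 := add_le_add_left h1 1
            _ < β := by rw [Ordinal.add_one_eq_succ]; exact hβlim.succ_lt hxβ
        have hEcof : ∀ α < β, ∃ e ∈ E, α < e := by
          intro α hα
          obtain ⟨x, hx, hαx⟩ := hcofS α hα
          obtain ⟨s, hs, hxs⟩ := hx.1
          refine ⟨sSup s + 1, ⟨s, hs, rfl⟩, ?_⟩
          calc α < x := hαx
            _ ≤ sSup s := le_csSup (hbddD s hs) hxs
            _ < sSup s + 1 := by rw [Ordinal.add_one_eq_succ]; exact Order.lt_succ _
        obtain ⟨x, hxS, hxC⟩ := hstat _ (clubIn_closure hEβ hEcof)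
        obtain ⟨t, ht, hxt⟩ := hxS.1
        have hxκ : x.cof = κ := ((hD t ht).2.1 x hxt).2
        rcases hxC with hxE | ⟨_, hxne, hxsup⟩
        · obtain ⟨s, hs, hxeq⟩ := hxE
          have hxeq' : sSup s + 1 = x := hxeq
          rw [← hxeq', Ordinal.add_one_eq_succ, Ordinal.cof_succ] at hxκ
          rw [← hxκ] at hκunc
          exact absurd hκunc (not_lt.mpr Cardinal.one_lt_aleph0.le)
        · have hlt : ∀ y ∈ E ∩ Set.Iio x, y < sSup (E ∩ Set.Iio x) := by
            intro y hy; rw [hxsup]; exact hy.2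
          have hXκ : #(E ∩ Set.Iio x : Set Ordinal.{0}) < Cardinal.lift.{1} κ :=
            lt_of_le_of_lt ((Cardinal.mk_le_mk_of_subset Set.inter_subset_left).trans
              Cardinal.mk_image_le) hcard
          have hcc := cof_sSup_lt hXκ hlt
          rw [hxsup, hxκ] at hcc
          exact absurd hcc (lt_irrefl κ)
  refine ⟨⟨?_, ?_, ?_, ?_⟩, hlow⟩
  · refine ⟨sSup ((fun s : Set Ordinal.{0} => sSup s) '' D), ?_, ?_⟩
    · refine sSup_lt_ord_of hθreg
        (lt_of_le_of_lt Cardinal.mk_image_le (hcard.trans (Cardinal.lift_lt.mpr hκθ))) ?_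
      rintro _ ⟨s, hs, rfl⟩
      obtain ⟨η, hη, hηb⟩ := (hD s hs).1
      exact lt_of_le_of_lt (csSup_le' hηb) hη
    · rintro x ⟨s, hs, hxs⟩
      have h1 : x ≤ sSup s := le_csSup (hbddD s hs) hxs
      have h2 : sSup s ≤ sSup ((fun s : Set Ordinal.{0} => sSup s) '' D) := by
        refine le_csSup ⟨θ.ord, ?_⟩ (Set.mem_image_of_mem _ hs)
        rintro _ ⟨t, ht, rfl⟩
        obtain ⟨η, hη, hηb⟩ := (hD t ht).1
        exact (csSup_le' hηb).trans hη.le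
      exact h1.trans h2
  · rintro x ⟨s, hs, hxs⟩
    exact (hD s hs).2.1 x hxs
  · intro hcof hstat
    refine key _ hcof ?_
    intro C hC
    obtain ⟨x, hx1, hx2⟩ := hstat C hC
    exact ⟨x, ⟨hx1, hC.1 hx2⟩, hx2⟩
  · exact key
end

section
/- Suppose κ is a measurable cardinal, η ≥ κ is a cardinal, U is a κ-complete nonprincipal ultrafilter on κ, and the set A = {δ < κ : there exists a fine δ-complete ultrafilter on P_δ(η)} belongs to U. Then there exists a fine κ-complete ultrafilter on P_κ(η); that is, a measurable limit (in the measure-one sense) of η-strongly compact cardinals is itself η-strongly compact. -/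
open Cardinal

/-- `U` is an ultrafilter on `X` (as a set of subsets of `X`). -/
def IsUltra {X : Type} (U : Set (Set X)) : Prop :=
  Set.univ ∈ U ∧ ∅ ∉ U ∧ (∀ A ∈ U, ∀ B : Set X, A ⊆ B → B ∈ U) ∧
    (∀ A ∈ U, ∀ B ∈ U, A ∩ B ∈ U) ∧ ∀ A : Set X, A ∈ U ∨ Aᶜ ∈ U

/-- `U` is `κ`-complete: closed under intersections of fewer than `κ` of its
members. -/
def IsCompleteUF {X : Type} (κ : Cardinal.{0}) (U : Set (Set X)) : Prop :=
  ∀ s : Set (Set X), #s < κ → (∀ A ∈ s, A ∈ U) → ⋂₀ s ∈ U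

/-- `P_δ(η)`: the subsets of `η` (represented by its canonical carrier type
`η.ord.ToType`) of cardinality less than `δ`. -/
def Pset (δ η : Cardinal.{0}) : Type :=
  {x : Set η.ord.ToType // #x < δ}

/-- `W` is fine: for every `a < η`, the set of `x` with `a ∈ x` belongs to `W`. -/
def IsFine {δ η : Cardinal.{0}} (W : Set (Set (Pset δ η))) : Prop :=
  ∀ a : η.ord.ToType, {x : Pset δ η | a ∈ x.1} ∈ W

/-- `δ` is `η`-strongly compact: there is a fine `δ`-complete ultrafilter on
`P_δ(η)`. -/
def SCompact (δ η : Cardinal.{0}) : Prop :=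
  ∃ W : Set (Set (Pset δ η)), IsUltra W ∧ IsCompleteUF δ W ∧ IsFine W

/-- The cardinal `δ < κ` corresponding to an element of the canonical carrier
of `κ`: the cardinality of the ordinal position of `a` below `κ`. -/
noncomputable def posCard {κ : Cardinal.{0}} (a : κ.ord.ToType) : Cardinal.{0} :=
  (@Ordinal.typein κ.ord.ToType (· < ·) isWellOrder_lt a).card

section Helpers

variable {X : Type} {κ : Cardinal.{0}} {U : Set (Set X)}

lemma IsUltra.up (hU : IsUltra U) {A B : Set X} (hA : A ∈ U) (h : A ⊆ B) : B ∈ U :=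
  hU.2.2.1 A hA B h

lemma IsUltra.inter (hU : IsUltra U) {A B : Set X} (hA : A ∈ U) (hB : B ∈ U) :
    A ∩ B ∈ U := hU.2.2.2.1 A hA B hB

lemma IsUltra.nonempty (hU : IsUltra U) {A : Set X} (hA : A ∈ U) : A.Nonempty := by
  rcases A.eq_empty_or_nonempty with h | h
  · exact absurd (h ▸ hA) hU.2.1
  · exact h

lemma IsUltra.compl_of_not_mem (hU : IsUltra U) {A : Set X} (h : A ∉ U) : Aᶜ ∈ U :=
  (hU.2.2.2.2 A).resolve_left h

lemma small_compl (hU : IsUltra U) (hUc : IsCompleteUF κ U) (hUnp : ∀ a : X, {a} ∉ U)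
    {C : Set X} (hC : #C < κ) : Cᶜ ∈ U := by
  have hsub : ⋂₀ ((fun c => ({c}ᶜ : Set X)) '' C) = Cᶜ := by
    ext x
    simp only [Set.sInter_image, Set.mem_iInter, Set.mem_compl_iff, Set.mem_singleton_iff]
    constructor
    · intro h hx; exact h x hx rfl
    · rintro h c hc rfl; exact h hc
  rw [← hsub]
  exact hUc _ (lt_of_le_of_lt Cardinal.mk_image_le hC)
    (by rintro A ⟨c, _, rfl⟩; exact hU.compl_of_not_mem (hUnp c))

lemma pigeon (hU : IsUltra U) (hUc : IsCompleteUF κ U) {ι : Type} {t : Set ι}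
    (ht : #t < κ) {C : Set X} (hC : C ∈ U) (F : X → ι) (hF : ∀ a ∈ C, F a ∈ t) :
    ∃ i ∈ t, {a | a ∈ C ∧ F a = i} ∈ U := by
  by_contra h
  push_neg at h
  have hfm : ⋂₀ ((fun i => ({a | a ∈ C ∧ F a = i}ᶜ : Set X)) '' t) ∈ U :=
    hUc _ (lt_of_le_of_lt Cardinal.mk_image_le ht)
      (by rintro A ⟨i, hi, rfl⟩; exact hU.compl_of_not_mem (h i hi))
  obtain ⟨a, haC, haI⟩ := hU.nonempty (hU.inter hC hfm)
  exact haI _ (Set.mem_image_of_mem _ (hF a haC)) ⟨haC, rfl⟩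

end Helpers

lemma posCard_lt {κ : Cardinal.{0}} (a : κ.ord.ToType) : posCard a < κ := by
  have h := @Ordinal.typein_lt_type κ.ord.ToType (· < ·) isWellOrder_lt a
  rw [Ordinal.type_toType] at h
  exact Cardinal.lt_ord.mp h

lemma mk_lt_posCard {κ : Cardinal.{0}} (a : κ.ord.ToType) :
    #{b : κ.ord.ToType | b < a} = posCard a :=
  @Ordinal.card_typein κ.ord.ToType (· < ·) isWellOrder_lt a

/-- Measure-one many points have large position: a measurable cardinal is a
limit cardinal. -/
lemma posCard_large (κ : Cardinal.{0}) (hκ : ℵ₀ < κ) (U : Set (Set κ.ord.ToType))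
    (hU : IsUltra U) (hUc : IsCompleteUF κ U) (hUnp : ∀ a : κ.ord.ToType, {a} ∉ U)
    {μ : Cardinal.{0}} (hμ : μ < κ) : {a : κ.ord.ToType | μ < posCard a} ∈ U := by
  classical
  set ν := max μ ℵ₀ with hνdef
  have hν : ν < κ := max_lt hμ hκ
  have hν0 : ℵ₀ ≤ ν := le_max_right _ _
  suffices h : {a : κ.ord.ToType | ν < posCard a} ∈ U by
    exact hU.up h fun a ha => show μ < posCard a from
      lt_of_le_of_lt (le_max_left μ ℵ₀) ha
  by_contra hS
  have hSc : {a : κ.ord.ToType | posCard a ≤ ν} ∈ U := by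
    have := hU.compl_of_not_mem hS
    have he : {a : κ.ord.ToType | ν < posCard a}ᶜ = {a | posCard a ≤ ν} := by
      ext a; simp [not_lt]
    rwa [he] at this
  set M := ν.ord.ToType with hMdef
  have hMne : Nonempty M := by
    rw [hMdef, Ordinal.toType_nonempty_iff_ne_zero]
    have hpos : (0 : Ordinal) < ν.ord :=
      Cardinal.lt_ord.2 (by simpa using lt_of_lt_of_le Cardinal.aleph0_pos hν0)
    exact hpos.ne'
  have hMcard : #M = ν := by rw [hMdef, Cardinal.mk_toType, Cardinal.card_ord]
  -- injections from predecessors into M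
  have hf : ∀ a : κ.ord.ToType, ∃ f : {b : κ.ord.ToType // b < a} → M,
      posCard a ≤ ν → Function.Injective f := by
    intro a
    by_cases h : posCard a ≤ ν
    · have hle : #{b : κ.ord.ToType // b < a} ≤ #M := by
        rw [hMcard]
        calc #{b : κ.ord.ToType // b < a} = posCard a := mk_lt_posCard a
          _ ≤ ν := h
      obtain ⟨f⟩ := Cardinal.le_def _ _ |>.mp hle
      exact ⟨f, fun _ => f.injective⟩
    · exact ⟨fun _ => Classical.arbitrary M, fun h' => absurd h' h⟩
  choose f hfinj using hf
  set F : κ.ord.ToType → κ.ord.ToType → M :=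
    fun b a => if h : b < a then f a ⟨b, h⟩ else Classical.arbitrary M with hFdef
  -- the sets D b
  have hD : ∀ b : κ.ord.ToType,
      ({a | posCard a ≤ ν} ∩ {a | b < a} : Set κ.ord.ToType) ∈ U := by
    intro b
    refine hU.inter hSc ?_
    have hsmall : #({a : κ.ord.ToType | a ≤ b}) < κ := by
      have hsub : ({a : κ.ord.ToType | a ≤ b}) ⊆ {a | a < b} ∪ {b} := by
        intro a ha
        have ha' : a ≤ b := ha
        rcases lt_or_eq_of_le ha' with h | h
        · exact Or.inl h
        · exact Or.inr (by simp [h])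
      calc #({a : κ.ord.ToType | a ≤ b}) ≤ #(({a | a < b} ∪ {b} : Set κ.ord.ToType)) :=
            Cardinal.mk_le_mk_of_subset hsub
        _ ≤ #({a : κ.ord.ToType | a < b}) + #({b} : Set κ.ord.ToType) := Cardinal.mk_union_le _ _
        _ = posCard b + 1 := by rw [mk_lt_posCard, Cardinal.mk_singleton]
        _ < κ := Cardinal.add_lt_of_lt hκ.le (posCard_lt b) (lt_of_lt_of_le one_lt_aleph0 hκ.le)
    have := small_compl hU hUc hUnp hsmall
    have he : ({a : κ.ord.ToType | a ≤ b})ᶜ = {a | b < a} := by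
      ext a; simp [not_le]
    rwa [he] at this
  -- pigeonhole: constant value on a U-large set
  have hxi : ∀ b : κ.ord.ToType, ∃ ξ : M,
      {a | a ∈ ({a | posCard a ≤ ν} ∩ {a | b < a} : Set κ.ord.ToType) ∧ F b a = ξ} ∈ U := by
    intro b
    obtain ⟨ξ, -, h⟩ := pigeon hU hUc (t := (Set.univ : Set M))
      (by rw [Cardinal.mk_univ, hMcard]; exact hν) (hD b) (F b) (fun _ _ => trivial)
    exact ⟨ξ, h⟩
  choose ξ hξ using hxi
  have hninj : ¬ Function.Injective ξ := by
    intro hi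
    have h1 : #(κ.ord.ToType) ≤ #M := Cardinal.mk_le_of_injective hi
    rw [Cardinal.mk_toType, Cardinal.card_ord, hMcard] at h1
    exact absurd h1 (not_le.2 hν)
  rw [Function.not_injective_iff] at hninj
  obtain ⟨b, b', hbb, hne⟩ := hninj
  obtain ⟨a, h1, h2⟩ := hU.nonempty (hU.inter (hξ b) (hξ b'))
  obtain ⟨⟨haS, hb⟩, hFb⟩ := h1
  obtain ⟨⟨-, hb'⟩, hFb'⟩ := h2
  apply hne
  have eF : F b a = f a ⟨b, hb⟩ := dif_pos hb
  have eF' : F b' a = f a ⟨b', hb'⟩ := dif_pos hb'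
  have e1 : f a ⟨b, hb⟩ = ξ b := eF ▸ hFb
  have e2 : f a ⟨b', hb'⟩ = ξ b' := eF' ▸ hFb'
  have := hfinj a haS (e1.trans (hbb.trans e2.symm))
  exact congrArg Subtype.val this

/-- Menas: if `κ` is measurable, `η ≥ κ`, `U` is a `κ`-complete nonprincipal
ultrafilter on `κ`, and `U`-almost every `δ < κ` is `η`-strongly compact, then
`κ` is `η`-strongly compact. -/
theorem stmt11 (κ η : Cardinal.{0}) (hκ : ℵ₀ < κ) (hη : κ ≤ η)
    (U : Set (Set κ.ord.ToType)) (hU : IsUltra U) (hUc : IsCompleteUF κ U)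
    (hUnp : ∀ a : κ.ord.ToType, {a} ∉ U)
    (hA : {a : κ.ord.ToType | SCompact (posCard a) η} ∈ U) :
    SCompact κ η := by
  classical
  -- choose witnesses
  have hWex : ∀ a : κ.ord.ToType, ∃ W : Set (Set (Pset (posCard a) η)),
      SCompact (posCard a) η → (IsUltra W ∧ IsCompleteUF (posCard a) W ∧ IsFine W) := by
    intro a
    by_cases h : SCompact (posCard a) η
    · obtain ⟨W, hW⟩ := h
      exact ⟨W, fun _ => hW⟩
    · exact ⟨∅, fun h' => absurd h' h⟩
  choose Wf hWf using hWex
  set A := {a : κ.ord.ToType | SCompact (posCard a) η} with hAdef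
  -- the embedding and pullback
  let e : ∀ a : κ.ord.ToType, Pset (posCard a) η → Pset κ η :=
    fun a x => ⟨x.1, lt_trans x.2 (posCard_lt a)⟩
  let pull : ∀ a : κ.ord.ToType, Set (Pset κ η) → Set (Pset (posCard a) η) :=
    fun a X => (e a) ⁻¹' X
  have pull_sInter : ∀ (a : κ.ord.ToType) (s : Set (Set (Pset κ η))),
      pull a (⋂₀ s) = ⋂₀ ((pull a) '' s) := by
    intro a s
    simp only [pull, Set.preimage_sInter, Set.sInter_image]
  refine ⟨{X | {a | pull a X ∈ Wf a} ∈ U}, ⟨?_, ?_, ?_, ?_, ?_⟩, ?_, ?_⟩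
  · -- univ
    exact hU.up hA fun a ha => by
      show pull a Set.univ ∈ Wf a
      rw [show pull a Set.univ = Set.univ from Set.preimage_univ]
      exact (hWf a ha).1.1
  · -- empty
    intro h
    obtain ⟨a, ha, haA⟩ := hU.nonempty (hU.inter h hA)
    have : pull a ∅ ∈ Wf a := ha
    rw [show pull a ∅ = ∅ from Set.preimage_empty] at this
    exact (hWf a haA).1.2.1 this
  · -- upward closed
    intro X hX B hXB
    refine hU.up (hU.inter hX hA) fun a ha => ?_
    exact (hWf a ha.2).1.2.2.1 (pull a X) ha.1 (pull a B) (Set.preimage_mono hXB)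
  · -- intersections
    intro X hX B hB
    refine hU.up (hU.inter (hU.inter hX hB) hA) fun a ha => ?_
    show pull a (X ∩ B) ∈ Wf a
    rw [show pull a (X ∩ B) = pull a X ∩ pull a B from Set.preimage_inter]
    exact (hWf a ha.2).1.2.2.2.1 _ ha.1.1 _ ha.1.2
  · -- ultra
    intro X
    by_cases hX : {a | pull a X ∈ Wf a} ∈ U
    · exact Or.inl hX
    · refine Or.inr (hU.up (hU.inter (hU.compl_of_not_mem hX) hA) fun a ha => ?_)
      show pull a Xᶜ ∈ Wf a
      rw [show pull a Xᶜ = (pull a X)ᶜ from Set.preimage_compl]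
      exact ((hWf a ha.2).1.2.2.2.2 (pull a X)).resolve_left ha.1
  · -- κ-completeness
    intro s hs hsmem
    show {a | pull a (⋂₀ s) ∈ Wf a} ∈ U
    by_contra hG
    have hGc := hU.compl_of_not_mem hG
    have hP : ({a | pull a (⋂₀ s) ∈ Wf a}ᶜ ∩ A ∩ {a | #s < posCard a}) ∈ U :=
      hU.inter (hU.inter hGc hA) (posCard_large κ hκ U hU hUc hUnp hs)
    rcases s.eq_empty_or_nonempty with hse | ⟨X₀, hX₀⟩
    · -- empty family: sInter = univ
      obtain ⟨a, ⟨hG', haA⟩, -⟩ := hU.nonempty hP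
      apply hG'
      show pull a (⋂₀ s) ∈ Wf a
      rw [hse]
      rw [show pull a (⋂₀ (∅ : Set (Set (Pset κ η)))) = Set.univ by
        simp [pull]]
      exact (hWf a haA).1.1
    · -- choose a bad set for each bad point
      have hch : ∀ a : κ.ord.ToType, ∃ X : Set (Pset κ η), X ∈ s ∧
          (a ∈ ({b | pull b (⋂₀ s) ∈ Wf b}ᶜ ∩ A ∩ {b | #s < posCard b}) →
            pull a X ∉ Wf a) := by
        intro a
        by_cases haP : a ∈ ({b | pull b (⋂₀ s) ∈ Wf b}ᶜ ∩ A ∩ {b | #s < posCard b})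
        · obtain ⟨⟨hG', haA⟩, hbig⟩ := haP
          have hgood : ∃ X ∈ s, pull a X ∉ Wf a := by
            by_contra hcon
            push_neg at hcon
            apply hG'
            show pull a (⋂₀ s) ∈ Wf a
            rw [pull_sInter]
            refine (hWf a haA).2.1 _ (lt_of_le_of_lt Cardinal.mk_image_le hbig) ?_
            rintro B ⟨X, hXs, rfl⟩
            exact hcon X hXs
          obtain ⟨X, hXs, hXbad⟩ := hgood
          exact ⟨X, hXs, fun _ => hXbad⟩
        · exact ⟨X₀, hX₀, fun h => absurd h haP⟩
      choose F hFs hFbad using hch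
      obtain ⟨X, hXs, hQ⟩ := pigeon hU hUc hs hP F (fun a _ => hFs a)
      have hBX : {a | pull a X ∈ Wf a} ∈ U := hsmem X hXs
      obtain ⟨a, ⟨haP, haF⟩, haB⟩ := hU.nonempty (hU.inter hQ hBX)
      exact hFbad a haP (haF ▸ haB)
  · -- fineness
    intro b
    exact hU.up hA fun a ha => (hWf a ha).2.2 b
end

section
/- Let κ be a regular uncountable cardinal and let η > κ be a singular cardinal with cf(η) ≥ κ. Suppose that κ is <η-strongly compact, i.e., for every cardinal β with κ ≤ β < η there is a fine κ-complete ultrafilter on P_κ(β), and suppose additionally there is a fine κ-complete ultrafilter on P_κ(cf(η)). Then κ is η-strongly compact: there is a fine κ-complete ultrafilter on P_κ(η). -/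
open Cardinal

/-! ### Auxiliary lemmas -/

/-- Pushforward of an ultrafilter is an ultrafilter. -/
lemma push_isUltra {X Y : Type} (f : X → Y) {U : Set (Set X)} (h : IsUltra U) :
    IsUltra {B : Set Y | f ⁻¹' B ∈ U} := by
  obtain ⟨h1, h2, h3, h4, h5⟩ := h
  refine ⟨?_, ?_, ?_, ?_, ?_⟩
  · show f ⁻¹' Set.univ ∈ U
    rwa [Set.preimage_univ]
  · show f ⁻¹' (∅ : Set Y) ∈ U → False
    rw [Set.preimage_empty]; exact h2
  · intro A hA B hAB
    exact h3 _ hA _ (Set.preimage_mono hAB)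
  · intro A hA B hB
    show f ⁻¹' (A ∩ B) ∈ U
    rw [Set.preimage_inter]; exact h4 _ hA _ hB
  · intro A
    rcases h5 (f ⁻¹' A) with h | h
    · exact Or.inl h
    · right; show f ⁻¹' Aᶜ ∈ U; rwa [Set.preimage_compl]

/-- Pushforward of a `κ`-complete filter is `κ`-complete. -/
lemma push_isComplete {X Y : Type} (κ : Cardinal.{0}) (f : X → Y) {U : Set (Set X)}
    (h : IsCompleteUF κ U) : IsCompleteUF κ {B : Set Y | f ⁻¹' B ∈ U} := by
  intro 𝒮 h𝒮 hmem
  show f ⁻¹' ⋂₀ 𝒮 ∈ U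
  have heq : f ⁻¹' ⋂₀ 𝒮 = ⋂₀ ((fun A => f ⁻¹' A) '' 𝒮) := by
    ext x
    simp only [Set.mem_preimage, Set.mem_sInter, Set.mem_image,
      forall_exists_index, and_imp]
    constructor
    · rintro hx A B hB rfl; exact hx B hB
    · intro hx A hA; exact hx _ A hA rfl
  rw [heq]
  exact h _ (Cardinal.mk_image_le.trans_lt h𝒮)
    (by rintro _ ⟨A, hA, rfl⟩; exact hmem A hA)

/-- The sum of ultrafilters along an ultrafilter is an ultrafilter. -/
lemma sum_isUltra {S Y : Type} {V : Set (Set S)} (hV : IsUltra V)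
    {U : S → Set (Set Y)} (hU : ∀ s, IsUltra (U s)) :
    IsUltra {B : Set Y | {s | B ∈ U s} ∈ V} := by
  obtain ⟨hVuniv, hVempty, hVup, hVint, hVult⟩ := hV
  refine ⟨?_, ?_, ?_, ?_, ?_⟩
  · show {s | Set.univ ∈ U s} ∈ V
    have : {s | (Set.univ : Set Y) ∈ U s} = Set.univ :=
      Set.eq_univ_of_forall fun s => (hU s).1
    rw [this]; exact hVuniv
  · intro h
    have h' : {s | (∅ : Set Y) ∈ U s} ∈ V := h
    have : {s | (∅ : Set Y) ∈ U s} = ∅ :=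
      Set.eq_empty_iff_forall_notMem.mpr fun s hs => (hU s).2.1 hs
    rw [this] at h'; exact hVempty h'
  · intro A hA B hAB
    exact hVup _ hA _ fun s hs => (hU s).2.2.1 A hs B hAB
  · intro A hA B hB
    refine hVup _ (hVint _ hA _ hB) _ ?_
    rintro s ⟨h1, h2⟩
    exact (hU s).2.2.2.1 A h1 B h2
  · intro A
    rcases hVult {s | A ∈ U s} with h | h
    · exact Or.inl h
    · right
      refine hVup _ h _ fun s hs => ?_
      exact ((hU s).2.2.2.2 A).resolve_left hs

/-- The sum of `κ`-complete ultrafilters along a `κ`-complete ultrafilter is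
`κ`-complete. -/
lemma sum_isComplete {S Y : Type} (κ : Cardinal.{0}) {V : Set (Set S)} (hV : IsUltra V)
    (hVc : IsCompleteUF κ V) {U : S → Set (Set Y)} (hUc : ∀ s, IsCompleteUF κ (U s)) :
    IsCompleteUF κ {B : Set Y | {s | B ∈ U s} ∈ V} := by
  intro 𝒮 h𝒮 hmem
  show {s | ⋂₀ 𝒮 ∈ U s} ∈ V
  refine hV.2.2.1 _ (hVc ((fun A => {s | A ∈ U s}) '' 𝒮)
    (Cardinal.mk_image_le.trans_lt h𝒮)
    (by rintro _ ⟨A, hA, rfl⟩; exact hmem A hA)) _ ?_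
  intro s hs
  exact hUc s 𝒮 h𝒮 fun A hA => hs _ ⟨A, hA, rfl⟩

/-- An injection from `X` to `Y` whose range contains a prescribed small set. -/
lemma exists_inj_superset {X Y : Type} (A : Set Y) (hA : #A ≤ #X)
    (hXY : #X < #Y) (hY : ℵ₀ ≤ #Y) :
    ∃ f : X → Y, Function.Injective f ∧ A ⊆ Set.range f := by
  classical
  haveI : Infinite Y := Cardinal.infinite_iff.mpr hY
  have hAc : #(↥Aᶜ) = #Y := Cardinal.mk_compl_of_infinite A (hA.trans_lt hXY)
  obtain ⟨ι⟩ := (Cardinal.le_def _ _).mp hA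
  have hj : #(↥(Set.range ⇑ι)ᶜ) ≤ #(↥Aᶜ) := by
    rw [hAc]; exact (Cardinal.mk_set_le _).trans hXY.le
  obtain ⟨j⟩ := (Cardinal.le_def _ _).mp hj
  refine ⟨fun x => if h : x ∈ Set.range ⇑ι then (h.choose : ↥A).1 else (j ⟨x, h⟩).1,
    ?_, ?_⟩
  · intro x₁ x₂ hx
    dsimp only at hx
    by_cases h₁ : x₁ ∈ Set.range ⇑ι <;> by_cases h₂ : x₂ ∈ Set.range ⇑ι
    · rw [dif_pos h₁, dif_pos h₂] at hx
      rw [← h₁.choose_spec, ← h₂.choose_spec, Subtype.ext hx]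
    · rw [dif_pos h₁, dif_neg h₂] at hx
      exact absurd (hx ▸ (h₁.choose).2) (j ⟨x₂, h₂⟩).2
    · rw [dif_neg h₁, dif_pos h₂] at hx
      exact absurd (hx ▸ (j ⟨x₁, h₁⟩).2) (not_not.mpr (h₂.choose).2)
    · rw [dif_neg h₁, dif_neg h₂] at hx
      exact congrArg Subtype.val (j.injective (Subtype.ext hx))
  · intro a ha
    refine ⟨ι ⟨a, ha⟩, ?_⟩
    have h : (ι ⟨a, ha⟩ : X) ∈ Set.range ⇑ι := ⟨⟨a, ha⟩, rfl⟩
    dsimp only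
    rw [dif_pos h, ι.injective h.choose_spec]

/-- If `κ` is regular uncountable, `η > κ` is a singular cardinal with
`cf(η) ≥ κ`, `κ` is `<η`-strongly compact (i.e. `β`-strongly compact for every
cardinal `β` with `κ ≤ β < η`), and moreover there is a fine `κ`-complete
ultrafilter on `P_κ(cf(η))`, then `κ` is `η`-strongly compact. -/
theorem stmt12 (κ η : Cardinal.{0}) (hreg : κ.IsRegular) (hunc : ℵ₀ < κ)
    (hκη : κ < η) (hsing : η.ord.cof < η) (hcof : κ ≤ η.ord.cof)
    (hlt : ∀ β : Cardinal.{0}, κ ≤ β → β < η → SCompact κ β)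
    (hcofsc : SCompact κ η.ord.cof) :
    SCompact κ η := by
  classical
  obtain ⟨V, hVu, hVc, hVf⟩ := hcofsc
  have hη0 : ℵ₀ ≤ η := (hunc.trans hκη).le
  have hηlim : Order.IsSuccLimit (η.ord) := Cardinal.isSuccLimit_ord hη0
  -- a cofinal sequence in η.ord indexed by the carrier of (cf η).ord
  obtain ⟨ι, f0, hlsub, hι⟩ := Ordinal.exists_lsub_cof η.ord
  have hmk : #((η.ord.cof).ord.ToType) = #ι := by
    rw [Cardinal.mk_toType, Cardinal.card_ord, hι]
  obtain ⟨eqv⟩ := Cardinal.eq.mp hmk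
  set c : (η.ord.cof).ord.ToType → Ordinal := fun i => f0 (eqv i) with hc
  have hc_lt : ∀ i, c i < η.ord := fun i => hlsub ▸ Ordinal.lt_lsub f0 (eqv i)
  have hc_cof : ∀ α < η.ord, ∃ i, α ≤ c i := by
    intro α hα
    rw [← hlsub, Ordinal.lt_lsub_iff] at hα
    obtain ⟨k, hk⟩ := hα
    exact ⟨eqv.symm k, by simpa [hc] using hk⟩
  -- ordinal rank of an element of the carrier of η.ord
  set oa : η.ord.ToType → Ordinal :=
    fun a => ((Ordinal.ToType.mk (o := η.ord)).symm a).1 with hoa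
  have hoa_lt : ∀ a, oa a < η.ord := fun a => ((Ordinal.ToType.mk (o := η.ord)).symm a).2
  have hoa_inj : Function.Injective oa := by
    intro a b h
    have := (Ordinal.ToType.mk (o := η.ord)).symm.injective (Subtype.ext h)
    exact this
  -- the sup over s and the corresponding cardinal β s
  set g : Pset κ η.ord.cof → Ordinal := fun s => ⨆ i : s.1, c i with hg
  have hg_lt : ∀ s, g s < η.ord := fun s =>
    Ordinal.iSup_lt_ord (s.2.trans_le hcof) fun i => hc_lt _
  have hg_mem : ∀ (s : Pset κ η.ord.cof), ∀ i ∈ s.1, c i ≤ g s := by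
    intro s i hi
    exact le_ciSup (Ordinal.bddAbove_range _) (⟨i, hi⟩ : s.1)
  set β : Pset κ η.ord.cof → Cardinal := fun s => max κ (g s + 1).card with hβ
  have hβ1 : ∀ s, κ ≤ β s := fun s => le_max_left _ _
  have hβ2 : ∀ s, β s < η := by
    intro s
    refine max_lt hκη (Cardinal.lt_ord.mp (hηlim.succ_lt (hg_lt s)))
  -- the initial segment T s and its embedding into (β s).ord.ToType
  set T : Pset κ η.ord.cof → Set η.ord.ToType := fun s => {a | oa a ≤ g s} with hT
  have hTcard : ∀ s, #(T s) ≤ β s := by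
    intro s
    have h1 : #(T s) ≤ #((g s + 1).ToType) := by
      refine ⟨⟨fun a => Ordinal.ToType.mk (o := g s + 1)
        ⟨oa a.1, by rw [Ordinal.add_one_eq_succ]; exact Order.lt_succ_iff.mpr (show oa a.1 ≤ g s from a.2)⟩, ?_⟩⟩
      intro a b h
      have := (Ordinal.ToType.mk (o := g s + 1)).injective h
      rw [Subtype.mk.injEq] at this
      exact Subtype.ext (hoa_inj this)
    have h2 : #((g s + 1).ToType) = (g s + 1).card := Cardinal.mk_toType _
    exact (h1.trans h2.le).trans (le_max_right _ _)
  have hmkη : #(η.ord.ToType) = η := by rw [Cardinal.mk_toType, Cardinal.card_ord]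
  have hmkβ : ∀ s, #((β s).ord.ToType) = β s := by
    intro s; rw [Cardinal.mk_toType, Cardinal.card_ord]
  have hexist : ∀ s : Pset κ η.ord.cof, ∃ f : (β s).ord.ToType → η.ord.ToType,
      Function.Injective f ∧ T s ⊆ Set.range f := by
    intro s
    refine exists_inj_superset (T s) ?_ ?_ ?_
    · rw [hmkβ s]; exact hTcard s
    · rw [hmkβ s, hmkη]; exact hβ2 s
    · rw [hmkη]; exact hη0
  choose e he_inj he_range using hexist
  -- ultrafilters on P_κ(β s) and their pushforwards to P_κ(η)
  choose W hWu hWc hWf using fun s : Pset κ η.ord.cof => hlt (β s) (hβ1 s) (hβ2 s)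
  set m : ∀ s : Pset κ η.ord.cof, Pset κ (β s) → Pset κ η :=
    fun s z => ⟨e s '' z.1, Cardinal.mk_image_le.trans_lt z.2⟩ with hm
  set U : Pset κ η.ord.cof → Set (Set (Pset κ η)) :=
    fun s => {B | m s ⁻¹' B ∈ W s} with hU
  have hUu : ∀ s, IsUltra (U s) := fun s => push_isUltra (m s) (hWu s)
  have hUc : ∀ s, IsCompleteUF κ (U s) := fun s => push_isComplete κ (m s) (hWc s)
  refine ⟨{B : Set (Pset κ η) | {s | B ∈ U s} ∈ V}, sum_isUltra hVu hUu,
    sum_isComplete κ hVu hVc hUc, ?_⟩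
  -- fineness
  intro a
  obtain ⟨i, hi⟩ := hc_cof (oa a) (hoa_lt a)
  show {s | {x : Pset κ η | a ∈ x.1} ∈ U s} ∈ V
  refine hVu.2.2.1 _ (hVf i) _ ?_
  intro s hs
  have haT : a ∈ T s := le_trans hi (hg_mem s i hs)
  obtain ⟨b, hb⟩ := he_range s haT
  show m s ⁻¹' {x : Pset κ η | a ∈ x.1} ∈ W s
  have heq : m s ⁻¹' {x : Pset κ η | a ∈ x.1} = {z : Pset κ (β s) | b ∈ z.1} := by
    ext z
    simp only [Set.mem_preimage, Set.mem_setOf_eq, hm]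
    constructor
    · rintro ⟨b', hb', hbeq⟩
      rwa [← he_inj s (hbeq.trans hb.symm)]
    · intro h
      exact ⟨b, h, hb⟩
  rw [heq]
  exact hWf s b
end
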